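/- Let U ⊆ ℝ² be open, let u, v : U → ℝ be twice continuously differentiable, let ρ, τ : U → ℝ satisfy ρ² + τ² < 1 pointwise on U, and suppose the Beltrami-equation relation (∂u/∂x − ∂v/∂y) + i(∂v/∂x + ∂u/∂y) = (ρ + iτ)·((∂u/∂x + ∂v/∂y) + i(∂v/∂x − ∂u/∂y)) holds at every point of U. Define α₁ = ((ρ−1)² + τ²)/(1 − ρ² − τ²), α₂ = −2τ/(1 − ρ² − τ²), α₃ = ((ρ+1)² + τ²)/(1 − ρ² − τ²) pointwise on U. Then ∇·(A∇u) = 0 and ∇·(A∇v) = 0 on U, where A = [[α₁, α₂], [α₂, α₃]]; explicitly, ∂/∂x(α₁·∂u/∂x + α₂·∂u/∂y) + ∂/∂y(α₂·∂u/∂x + α₃·∂u/∂y) = 0 and ∂/∂x(α₁·∂v/∂x + α₂·∂v/∂y) + ∂/∂y(α₂·∂v/∂x + α₃·∂v/∂y) = 0 at every point of U. -/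

import Mathlib

/-- Partial derivative in the `x`-direction of a function on `ℝ × ℝ`. -/
noncomputable def pdx (u : ℝ × ℝ → ℝ) (p : ℝ × ℝ) : ℝ :=
  fderiv ℝ u p (1, 0)

/-- Partial derivative in the `y`-direction of a function on `ℝ × ℝ`. -/
noncomputable def pdy (u : ℝ × ℝ → ℝ) (p : ℝ × ℝ) : ℝ :=
  fderiv ℝ u p (0, 1)

lemma lbs_mixed_swap {f : ℝ × ℝ → ℝ} {p : ℝ × ℝ} (hf : ContDiffAt ℝ 2 f p) (w w' : ℝ × ℝ) :
    fderiv ℝ (fun q => fderiv ℝ f q w) p w' = fderiv ℝ (fun q => fderiv ℝ f q w') p w := by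
  have hd : DifferentiableAt ℝ (fderiv ℝ f) p :=
    (hf.fderiv_right (m := 1) (by norm_num)).differentiableAt (by norm_num)
  have hsym := hf.isSymmSndFDerivAt (by norm_num)
  have e : ∀ z : ℝ × ℝ, fderiv ℝ (fun q => fderiv ℝ f q z) p
      = (fderiv ℝ (fderiv ℝ f) p).flip z := by
    intro z
    have := fderiv_clm_apply (c := fderiv ℝ f) (u := fun _ => z) hd (differentiableAt_const _)
    simpa using this
  rw [e, e]
  exact hsym w' w

lemma lbs_algebra {a b c d r t : ℝ} (h : r ^ 2 + t ^ 2 < 1)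
    (h1 : a - d = r * (a + d) - t * (c - b))
    (h2 : c + b = r * (c - b) + t * (a + d)) :
    ((r - 1) ^ 2 + t ^ 2) / (1 - r ^ 2 - t ^ 2) * a
        + -(2 * t) / (1 - r ^ 2 - t ^ 2) * b = d ∧
    -(2 * t) / (1 - r ^ 2 - t ^ 2) * a
        + ((r + 1) ^ 2 + t ^ 2) / (1 - r ^ 2 - t ^ 2) * b = -c ∧
    ((r - 1) ^ 2 + t ^ 2) / (1 - r ^ 2 - t ^ 2) * c
        + -(2 * t) / (1 - r ^ 2 - t ^ 2) * d = -b ∧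
    -(2 * t) / (1 - r ^ 2 - t ^ 2) * c
        + ((r + 1) ^ 2 + t ^ 2) / (1 - r ^ 2 - t ^ 2) * d = a := by
  have hD : 1 - r ^ 2 - t ^ 2 ≠ 0 := by nlinarith
  have k1 : ((r - 1) ^ 2 + t ^ 2) * a + -(2 * t) * b = (1 - r ^ 2 - t ^ 2) * d := by
    linear_combination ((1 - r) * h1 - t * h2)
  have k2 : -(2 * t) * a + ((r + 1) ^ 2 + t ^ 2) * b = (1 - r ^ 2 - t ^ 2) * (-c) := by
    linear_combination (-t * h1 + (1 + r) * h2)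
  have k3 : ((r - 1) ^ 2 + t ^ 2) * c + -(2 * t) * d = (1 - r ^ 2 - t ^ 2) * (-b) := by
    linear_combination (t * h1 + (1 - r) * h2)
  have k4 : -(2 * t) * c + ((r + 1) ^ 2 + t ^ 2) * d = (1 - r ^ 2 - t ^ 2) * a := by
    linear_combination (-(1 + r) * h1 - t * h2)
  refine ⟨?_, ?_, ?_, ?_⟩ <;>
    rw [div_mul_eq_mul_div, div_mul_eq_mul_div, ← add_div]
  · rw [k1, mul_div_cancel_left₀ _ hD]
  · rw [k2, mul_div_cancel_left₀ _ hD]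
  · rw [k3, mul_div_cancel_left₀ _ hD]
  · rw [k4, mul_div_cancel_left₀ _ hD]

/-- Let `U ⊆ ℝ²` be open, `u v ∈ C²(U)`, and `ρ, τ : U → ℝ` with `ρ² + τ² < 1` on `U`.
If the Beltrami relation
`(u_x - v_y) + i(v_x + u_y) = (ρ + iτ)((u_x + v_y) + i(v_x - u_y))` holds on `U`, then
with `α₁ = ((ρ-1)² + τ²)/(1-ρ²-τ²)`, `α₂ = -2τ/(1-ρ²-τ²)`, `α₃ = ((ρ+1)² + τ²)/(1-ρ²-τ²)`
on `U`, we have `∇·(A∇u) = 0` and `∇·(A∇v) = 0` on `U`, i.e.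
`∂x(α₁ u_x + α₂ u_y) + ∂y(α₂ u_x + α₃ u_y) = 0` and
`∂x(α₁ v_x + α₂ v_y) + ∂y(α₂ v_x + α₃ v_y) = 0` at every point of `U`. -/
theorem lbs_divergence_form_equations
    (U : Set (ℝ × ℝ)) (hU : IsOpen U)
    (u v : ℝ × ℝ → ℝ)
    (hu : ContDiffOn ℝ 2 u U) (hv : ContDiffOn ℝ 2 v U)
    (ρ τ α₁ α₂ α₃ : ℝ × ℝ → ℝ)
    (hρτ : ∀ p ∈ U, ρ p ^ 2 + τ p ^ 2 < 1)
    (hbel : ∀ p ∈ U,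
      ((pdx u p - pdy v p : ℝ) : ℂ) + ((pdx v p + pdy u p : ℝ) : ℂ) * Complex.I
        = (((ρ p : ℝ) : ℂ) + ((τ p : ℝ) : ℂ) * Complex.I)
          * (((pdx u p + pdy v p : ℝ) : ℂ)
              + ((pdx v p - pdy u p : ℝ) : ℂ) * Complex.I))
    (hα₁ : ∀ p ∈ U, α₁ p = ((ρ p - 1) ^ 2 + τ p ^ 2) / (1 - ρ p ^ 2 - τ p ^ 2))
    (hα₂ : ∀ p ∈ U, α₂ p = -(2 * τ p) / (1 - ρ p ^ 2 - τ p ^ 2))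
    (hα₃ : ∀ p ∈ U, α₃ p = ((ρ p + 1) ^ 2 + τ p ^ 2) / (1 - ρ p ^ 2 - τ p ^ 2)) :
    ∀ p ∈ U,
      (pdx (fun q => α₁ q * pdx u q + α₂ q * pdy u q) p
        + pdy (fun q => α₂ q * pdx u q + α₃ q * pdy u q) p = 0) ∧
      (pdx (fun q => α₁ q * pdx v q + α₂ q * pdy v q) p
        + pdy (fun q => α₂ q * pdx v q + α₃ q * pdy v q) p = 0) := by
  intro p hp
  have hmem : U ∈ nhds p := hU.mem_nhds hp
  have key : ∀ q ∈ U,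
      (α₁ q * pdx u q + α₂ q * pdy u q = pdy v q) ∧
      (α₂ q * pdx u q + α₃ q * pdy u q = -(pdx v q)) ∧
      (α₁ q * pdx v q + α₂ q * pdy v q = -(pdy u q)) ∧
      (α₂ q * pdx v q + α₃ q * pdy v q = pdx u q) := by
    intro q hq
    have h := hbel q hq
    rw [Complex.ext_iff] at h
    simp [Complex.mul_re, Complex.mul_im] at h
    obtain ⟨h1, h2⟩ := h
    obtain ⟨k1, k2, k3, k4⟩ := lbs_algebra (hρτ q hq) h1 h2
    rw [hα₁ q hq, hα₂ q hq, hα₃ q hq]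
    exact ⟨k1, k2, k3, k4⟩
  have hvC : ContDiffAt ℝ 2 v p := hv.contDiffAt hmem
  have huC : ContDiffAt ℝ 2 u p := hu.contDiffAt hmem
  constructor
  · have E1 : (fun q => α₁ q * pdx u q + α₂ q * pdy u q)
        =ᶠ[nhds p] (fun q => fderiv ℝ v q (0, 1)) :=
      Filter.eventuallyEq_of_mem hmem (fun q hq => (key q hq).1)
    have E2 : (fun q => α₂ q * pdx u q + α₃ q * pdy u q)
        =ᶠ[nhds p] (fun q => -(fderiv ℝ v q (1, 0))) :=
      Filter.eventuallyEq_of_mem hmem (fun q hq => (key q hq).2.1)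
    have d1 : pdx (fun q => α₁ q * pdx u q + α₂ q * pdy u q) p
        = fderiv ℝ (fun q => fderiv ℝ v q (0, 1)) p (1, 0) := by
      show fderiv ℝ _ p (1, 0) = _
      rw [E1.fderiv_eq]
    have d2 : pdy (fun q => α₂ q * pdx u q + α₃ q * pdy u q) p
        = -(fderiv ℝ (fun q => fderiv ℝ v q (1, 0)) p (0, 1)) := by
      show fderiv ℝ _ p (0, 1) = _
      rw [E2.fderiv_eq, fderiv_fun_neg]
      simp
    rw [d1, d2, lbs_mixed_swap hvC (0, 1) (1, 0)]
    ring
  · have E1 : (fun q => α₁ q * pdx v q + α₂ q * pdy v q)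
        =ᶠ[nhds p] (fun q => -(fderiv ℝ u q (0, 1))) :=
      Filter.eventuallyEq_of_mem hmem (fun q hq => (key q hq).2.2.1)
    have E2 : (fun q => α₂ q * pdx v q + α₃ q * pdy v q)
        =ᶠ[nhds p] (fun q => fderiv ℝ u q (1, 0)) :=
      Filter.eventuallyEq_of_mem hmem (fun q hq => (key q hq).2.2.2)
    have d1 : pdx (fun q => α₁ q * pdx v q + α₂ q * pdy v q) p
        = -(fderiv ℝ (fun q => fderiv ℝ u q (0, 1)) p (1, 0)) := by
      show fderiv ℝ _ p (1, 0) = _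
      rw [E1.fderiv_eq, fderiv_fun_neg]
      simp
    have d2 : pdy (fun q => α₂ q * pdx v q + α₃ q * pdy v q) p
        = fderiv ℝ (fun q => fderiv ℝ u q (1, 0)) p (0, 1) := by
      show fderiv ℝ _ p (0, 1) = _
      rw [E2.fderiv_eq]
    rw [d1, d2, lbs_mixed_swap huC (0, 1) (1, 0)]
    ring
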